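/- (Grönwall-type lemma) Let γ > 0, T ∈ (0,∞), and let f₀, f₁, f₂ ∈ L¹(0,T) be nonnegative functions with ∫₀ᵀ f₀ dt ≤ C, ∫₀ᵀ f₁ dt ≤ Cγ, ∫₀ᵀ f₂ dt ≤ Cγ² for some constant C > 0. Then there exists M = M(C) > 0 such that every nonnegative absolutely continuous function f on [0,T] satisfying ∂ₜ(f²) ≤ f₀(t)f² + f₁(t)f + f₂(t) a.e. on (0,T) and f(0) ≤ Cγ, satisfies f(t) ≤ Mγ for all t ∈ [0,T]. -/

import Mathlib

open Real MeasureTheory intervalIntegral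

noncomputable def gronK (C : ℝ) : ℕ → ℝ
  | 0 => C
  | n + 1 => 2 * C + Real.sqrt (2 * gronK C n ^ 2 + 2 * C)

lemma gronK_pos (C : ℝ) (hC : 0 < C) : ∀ n, 0 < gronK C n
  | 0 => hC
  | (n + 1) => by
      have h := Real.sqrt_nonneg (2 * gronK C n ^ 2 + 2 * C)
      rw [gronK]; linarith

lemma gronK_le_succ (C : ℝ) (hC : 0 < C) (n : ℕ) : gronK C n ≤ gronK C (n + 1) := by
  have h1 := gronK_pos C hC n
  have h3 : Real.sqrt (gronK C n ^ 2) ≤ Real.sqrt (2 * gronK C n ^ 2 + 2 * C) :=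
    Real.sqrt_le_sqrt (by nlinarith)
  rw [Real.sqrt_sq h1.le] at h3
  rw [show gronK C (n + 1) = 2 * C + Real.sqrt (2 * gronK C n ^ 2 + 2 * C) from rfl]
  linarith

set_option maxHeartbeats 1000000 in
/-- Grönwall-type lemma (Lemma 5.1): for every `C > 0` there is `M = M(C) > 0` such that
whenever `γ > 0`, `T > 0`, `f₀, f₁, f₂ ∈ L¹(0,T)` are nonnegative with
`∫f₀ ≤ C`, `∫f₁ ≤ Cγ`, `∫f₂ ≤ Cγ²`, and `f ≥ 0` is such that `f²` is absolutely
continuous with a.e. derivative `d ≤ f₀f² + f₁f + f₂` (encoded via the fundamental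
theorem of calculus) and `f(0) ≤ Cγ`, then `f(t) ≤ Mγ` on `[0,T]`. -/
theorem stmt_13 (C : ℝ) (hC : 0 < C) :
    ∃ M > 0, ∀ (γ T : ℝ) (f0 f1 f2 f d : ℝ → ℝ),
      0 < γ → 0 < T →
      IntervalIntegrable f0 volume 0 T → IntervalIntegrable f1 volume 0 T →
      IntervalIntegrable f2 volume 0 T → IntervalIntegrable d volume 0 T →
      (∀ t ∈ Set.Ioo 0 T, 0 ≤ f0 t) → (∀ t ∈ Set.Ioo 0 T, 0 ≤ f1 t) →
      (∀ t ∈ Set.Ioo 0 T, 0 ≤ f2 t) →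
      (∫ t in (0:ℝ)..T, f0 t) ≤ C → (∫ t in (0:ℝ)..T, f1 t) ≤ C * γ →
      (∫ t in (0:ℝ)..T, f2 t) ≤ C * γ ^ 2 →
      (∀ t ∈ Set.Icc (0:ℝ) T, 0 ≤ f t) →
      (∀ t ∈ Set.Icc (0:ℝ) T, f t ^ 2 = f 0 ^ 2 + ∫ u in (0:ℝ)..t, d u) →
      (∀ᵐ u ∂volume, u ∈ Set.Ioo (0:ℝ) T →
        d u ≤ f0 u * f u ^ 2 + f1 u * f u + f2 u) →
      f 0 ≤ C * γ →
      ∀ t ∈ Set.Icc (0:ℝ) T, f t ≤ M * γ := by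
  refine ⟨gronK C (⌈2 * C⌉₊ + 1), gronK_pos C hC _, ?_⟩
  intro γ T f0 f1 f2 f d hγ hT hi0 hi1 hi2 hid hn0 hn1 hn2 hI0 hI1 hI2 hfnn hFTC hae hstart
  have hTle := hT.le
  -- integrability on subintervals
  have hInt : ∀ g : ℝ → ℝ, IntervalIntegrable g volume 0 T →
      ∀ a b : ℝ, 0 ≤ a → a ≤ b → b ≤ T → IntervalIntegrable g volume a b := by
    intro g hg a b ha hab hb
    exact hg.mono_set
      (by rw [Set.uIcc_of_le hab, Set.uIcc_of_le hTle]; exact Set.Icc_subset_Icc ha hb)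
  -- a.e. avoidance of a point
  have hne : ∀ c : ℝ, ∀ᵐ u : ℝ ∂volume, u ≠ c := by
    intro c
    rw [ae_iff]
    simpa using measure_singleton c
  -- nonnegativity of integrals of functions nonneg on (0,T)
  have hnnint : ∀ g : ℝ → ℝ, (∀ x ∈ Set.Ioo (0:ℝ) T, 0 ≤ g x) →
      ∀ a b : ℝ, 0 ≤ a → a ≤ b → b ≤ T → 0 ≤ ∫ u in a..b, g u := by
    intro g hg a b ha hab hb
    apply intervalIntegral.integral_nonneg_of_ae_restrict hab
    filter_upwards [ae_restrict_mem measurableSet_Icc, ae_restrict_of_ae (hne 0),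
      ae_restrict_of_ae (hne T)] with u hu h0u hTu
    exact hg u ⟨lt_of_le_of_ne (ha.trans hu.1) (Ne.symm h0u),
      lt_of_le_of_ne (hu.2.trans hb) hTu⟩
  -- continuity of f on [0,T]
  have hprim : ContinuousOn (fun x => ∫ u in (0:ℝ)..x, d u) (Set.Icc 0 T) := by
    have := intervalIntegral.continuousOn_primitive_interval' hid Set.left_mem_uIcc
    rwa [Set.uIcc_of_le hTle] at this
  have hfcont : ContinuousOn f (Set.Icc 0 T) := by
    have h1 : ContinuousOn (fun x => Real.sqrt (f 0 ^ 2 + ∫ u in (0:ℝ)..x, d u))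
        (Set.Icc 0 T) :=
      Real.continuous_sqrt.comp_continuousOn (continuousOn_const.add hprim)
    refine h1.congr fun x hx => ?_
    beta_reduce
    rw [← hFTC x hx]
    exact (Real.sqrt_sq (hfnn x hx)).symm
  have hAcont : ContinuousOn (fun x => ∫ u in (0:ℝ)..x, f0 u) (Set.Icc 0 T) := by
    have := intervalIntegral.continuousOn_primitive_interval' hi0 Set.left_mem_uIcc
    rwa [Set.uIcc_of_le hTle] at this
  -- the local bootstrap step
  have key : ∀ K : ℝ, 0 ≤ K → ∀ a b : ℝ, 0 ≤ a → a ≤ b → b ≤ T → f a ≤ K * γ →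
      (∫ u in a..b, f0 u) ≤ 1 / 2 →
      f b ≤ (2 * C + Real.sqrt (2 * K ^ 2 + 2 * C)) * γ := by
    intro K hK a b ha hab hbT hfa hhalf
    have haT : a ≤ T := hab.trans hbT
    obtain ⟨s, hs, hmax⟩ := isCompact_Icc.exists_isMaxOn (Set.nonempty_Icc.mpr hab)
      (hfcont.mono (Set.Icc_subset_Icc ha hbT))
    have h0s : 0 ≤ s := ha.trans hs.1
    have hsT : s ≤ T := hs.2.trans hbT
    have hSnn : 0 ≤ f s := hfnn s ⟨h0s, hsT⟩
    have hfb : f b ≤ f s := hmax (Set.right_mem_Icc.mpr hab)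
    have hmaxf : ∀ u ∈ Set.Icc a s, f u ≤ f s := fun u hu => hmax ⟨hu.1, hu.2.trans hs.2⟩
    -- FTC on [a,s]
    have hsplit : f s ^ 2 = f a ^ 2 + ∫ u in a..s, d u := by
      have h1 := hFTC s ⟨h0s, hsT⟩
      have h2 := hFTC a ⟨ha, haT⟩
      have h3 := integral_add_adjacent_intervals (hInt d hid 0 a le_rfl ha haT)
        (hInt d hid a s ha hs.1 hsT)
      rw [h1, ← h3, h2]; ring
    -- integrable majorant
    have hg0 : IntervalIntegrable (fun u => f0 u * f s ^ 2) volume a s :=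
      (hInt f0 hi0 a s ha hs.1 hsT).mul_const _
    have hg1 : IntervalIntegrable (fun u => f1 u * f s) volume a s :=
      (hInt f1 hi1 a s ha hs.1 hsT).mul_const _
    have hg2 := hInt f2 hi2 a s ha hs.1 hsT
    have hmono : (∫ u in a..s, d u) ≤
        ∫ u in a..s, (f0 u * f s ^ 2 + f1 u * f s + f2 u) := by
      refine intervalIntegral.integral_mono_ae_restrict hs.1
        (hInt d hid a s ha hs.1 hsT) ((hg0.add hg1).add hg2) ?_
      filter_upwards [ae_restrict_mem measurableSet_Icc, ae_restrict_of_ae hae,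
        ae_restrict_of_ae (hne a), ae_restrict_of_ae (hne T)] with u hu hdu hua huT
      have hu0T : u ∈ Set.Ioo 0 T :=
        ⟨lt_of_le_of_lt ha (lt_of_le_of_ne hu.1 (Ne.symm hua)),
          lt_of_le_of_ne (hu.2.trans hsT) huT⟩
      have hfu : f u ≤ f s := hmaxf u hu
      have hfun : 0 ≤ f u := hfnn u ⟨ha.trans hu.1, hu.2.trans hsT⟩
      have hd := hdu hu0T
      have e0 : f0 u * f u ^ 2 ≤ f0 u * f s ^ 2 :=
        mul_le_mul_of_nonneg_left (by nlinarith) (hn0 u hu0T)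
      have e1 : f1 u * f u ≤ f1 u * f s :=
        mul_le_mul_of_nonneg_left hfu (hn1 u hu0T)
      linarith
    have hveq : (∫ u in a..s, (f0 u * f s ^ 2 + f1 u * f s + f2 u))
        = (∫ u in a..s, f0 u) * f s ^ 2 + (∫ u in a..s, f1 u) * f s
          + ∫ u in a..s, f2 u := by
      rw [intervalIntegral.integral_add (hg0.add hg1) hg2,
        intervalIntegral.integral_add hg0 hg1,
        intervalIntegral.integral_mul_const, intervalIntegral.integral_mul_const]
    -- bounds on the three integrals
    have hb0 : (∫ u in a..s, f0 u) ≤ 1 / 2 := by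
      have hadd := integral_add_adjacent_intervals (hInt f0 hi0 a s ha hs.1 hsT)
        (hInt f0 hi0 s b h0s hs.2 hbT)
      have hpos := hnnint f0 hn0 s b h0s hs.2 hbT
      linarith
    have hb1 : (∫ u in a..s, f1 u) ≤ C * γ := by
      have h1 := integral_add_adjacent_intervals (hInt f1 hi1 0 a le_rfl ha haT)
        (hInt f1 hi1 a s ha hs.1 hsT)
      have h2 := integral_add_adjacent_intervals (hInt f1 hi1 0 s le_rfl h0s hsT)
        (hInt f1 hi1 s T h0s hsT le_rfl)
      have p1 := hnnint f1 hn1 0 a le_rfl ha haT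
      have p2 := hnnint f1 hn1 s T h0s hsT le_rfl
      linarith
    have hb2 : (∫ u in a..s, f2 u) ≤ C * γ ^ 2 := by
      have h1 := integral_add_adjacent_intervals (hInt f2 hi2 0 a le_rfl ha haT)
        (hInt f2 hi2 a s ha hs.1 hsT)
      have h2 := integral_add_adjacent_intervals (hInt f2 hi2 0 s le_rfl h0s hsT)
        (hInt f2 hi2 s T h0s hsT le_rfl)
      have p1 := hnnint f2 hn2 0 a le_rfl ha haT
      have p2 := hnnint f2 hn2 s T h0s hsT le_rfl
      linarith
    have hfa2 : f a ^ 2 ≤ K ^ 2 * γ ^ 2 := by nlinarith [hfnn a ⟨ha, haT⟩]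
    have hS2 : f s ^ 2 ≤ K ^ 2 * γ ^ 2 + 1 / 2 * f s ^ 2 + C * γ * f s + C * γ ^ 2 := by
      have t0 : (∫ u in a..s, f0 u) * f s ^ 2 ≤ 1 / 2 * f s ^ 2 :=
        mul_le_mul_of_nonneg_right hb0 (sq_nonneg _)
      have t1 : (∫ u in a..s, f1 u) * f s ≤ C * γ * f s :=
        mul_le_mul_of_nonneg_right hb1 hSnn
      linarith
    -- conclude
    set R := Real.sqrt (2 * K ^ 2 + 2 * C) with hRdef
    have hR : 0 ≤ R := Real.sqrt_nonneg _
    have hRsq : R ^ 2 = 2 * K ^ 2 + 2 * C := Real.sq_sqrt (by positivity)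
    by_contra hcon
    push_neg at hcon
    have hfb' : (2 * C + R) * γ < f s := lt_of_lt_of_le hcon hfb
    have hSpos : 0 < f s := lt_of_le_of_lt (by positivity) hfb'
    have m1 : (2 * C + R) * γ * f s < f s * f s := mul_lt_mul_of_pos_right hfb' hSpos
    have m3 : R * γ * ((2 * C + R) * γ) ≤ R * γ * f s :=
      mul_le_mul_of_nonneg_left hfb'.le (mul_nonneg hR hγ.le)
    have hRsq2 : R ^ 2 * γ ^ 2 = 2 * K ^ 2 * γ ^ 2 + 2 * C * γ ^ 2 := by rw [hRsq]; ring
    have hCR : 0 ≤ C * R * γ ^ 2 := by positivity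
    linarith [m1, m3, hS2, hRsq2, hCR]
  -- global induction
  have main : ∀ n : ℕ, ∀ x, x ∈ Set.Icc (0:ℝ) T → (∫ u in (0:ℝ)..x, f0 u) ≤ n / 2 →
      f x ≤ gronK C (n + 1) * γ := by
    intro n
    induction n with
    | zero =>
      intro x hx hAx
      have hAx' : (∫ u in (0:ℝ)..x, f0 u) ≤ 1 / 2 := by push_cast at hAx; linarith
      have h := key C hC.le 0 x le_rfl hx.1 hx.2 hstart hAx'
      simpa only [gronK] using h
    | succ n ih =>
      intro x hx hAx
      by_cases hcase : (∫ u in (0:ℝ)..x, f0 u) ≤ n / 2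
      · exact (ih x hx hcase).trans
          (mul_le_mul_of_nonneg_right (gronK_le_succ C hC (n + 1)) hγ.le)
      · push_neg at hcase
        have hmem : (n : ℝ) / 2 ∈
            Set.Icc ((fun y => ∫ u in (0:ℝ)..y, f0 u) 0)
              ((fun y => ∫ u in (0:ℝ)..y, f0 u) x) := by
          simp only [intervalIntegral.integral_same]
          exact ⟨by positivity, hcase.le⟩
        obtain ⟨a, haI, hAa⟩ := intermediate_value_Icc hx.1
          (hAcont.mono (Set.Icc_subset_Icc le_rfl hx.2)) hmem
        have hfa := ih a ⟨haI.1, haI.2.trans hx.2⟩ (le_of_eq hAa)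
        have hint : (∫ u in a..x, f0 u) ≤ 1 / 2 := by
          have hadd := integral_add_adjacent_intervals
            (hInt f0 hi0 0 a le_rfl haI.1 (haI.2.trans hx.2))
            (hInt f0 hi0 a x haI.1 haI.2 hx.2)
          push_cast at hAx
          linarith
        have h := key (gronK C (n + 1)) (gronK_pos C hC _).le a x haI.1 haI.2 hx.2 hfa hint
        simpa only [gronK] using h
  -- conclude
  intro t ht
  have hle : (∫ u in (0:ℝ)..t, f0 u) ≤ C := by
    have hadd := integral_add_adjacent_intervals (hInt f0 hi0 0 t le_rfl ht.1 ht.2)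
      (hInt f0 hi0 t T ht.1 ht.2 le_rfl)
    have hpos := hnnint f0 hn0 t T ht.1 ht.2 le_rfl
    linarith
  refine main ⌈2 * C⌉₊ t ht (hle.trans ?_)
  have := Nat.le_ceil (2 * C)
  linarith
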